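/- Let k be a field of characteristic zero and let M^• be a cosimplicial Σ•-module over k. Then the differential A* = Σ_{j=0}^{n} (−1)^j A_j : M^{n−1} → M^n preserves the sign decomposition: A*(sM^{n−1}) ⊆ sM^{n} and A*(rM^{n−1}) ⊆ rM^{n}. In particular, A*(sM^{n-1}) is contained in a Σ_{n+1}-submodule of M^{n} on which Alt acts as the identity. -/

import Mathlib

/-- The alternating operator `Alt = (1/N!) Σ_{σ ∈ Σ_N} sgn(σ) σ` associated to a linear
action `ρ` of the symmetric group `Σ_N` on a `k`-vector space. -/
noncomputable def altOp (k : Type*) [Field k] {M : Type*} [AddCommGroup M] [Module k M]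
    {N : ℕ} (ρ : Equiv.Perm (Fin N) →* Module.End k M) : Module.End k M :=
  (Nat.factorial N : k)⁻¹ •
    ∑ σ : Equiv.Perm (Fin N), (((Equiv.Perm.sign σ : ℤ) : k)) • ρ σ

section Aux

open Equiv Equiv.Perm

variable {k : Type*} [Field k] {M : Type*} [AddCommGroup M] [Module k M]
  {N : ℕ} (ρ : Equiv.Perm (Fin N) →* Module.End k M)

lemma sign_cast_mul_self (k : Type*) [Field k] (σ : Equiv.Perm (Fin N)) :
    (((Equiv.Perm.sign σ : ℤ) : k)) * (((Equiv.Perm.sign σ : ℤ) : k)) = 1 := by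
  rcases Int.units_eq_one_or (Equiv.Perm.sign σ) with h | h <;> simp [h]

lemma altOp_apply (v : M) :
    altOp k ρ v = (Nat.factorial N : k)⁻¹ •
      ∑ σ : Equiv.Perm (Fin N), (((Equiv.Perm.sign σ : ℤ) : k)) • ρ σ v := by
  simp [altOp]

lemma ρ_altOp (σ : Equiv.Perm (Fin N)) (v : M) :
    ρ σ (altOp k ρ v) = (((Equiv.Perm.sign σ : ℤ) : k)) • altOp k ρ v := by
  have key : ∑ π : Equiv.Perm (Fin N), (((sign π : ℤ) : k)) • ρ σ (ρ π v)
      = (((sign σ : ℤ) : k)) • ∑ π : Equiv.Perm (Fin N), (((sign π : ℤ) : k)) • ρ π v := by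
    rw [Finset.smul_sum]
    refine Fintype.sum_equiv (Equiv.mulLeft σ) _ _ (fun π => ?_)
    simp only [Equiv.coe_mulLeft, smul_smul]
    rw [map_mul ρ, Module.End.mul_apply]
    congr 1
    rcases Int.units_eq_one_or (sign σ) with h | h <;> simp [h]
  simp only [altOp_apply, map_smul, map_sum]
  rw [key, smul_comm]

lemma altOp_ρ (σ : Equiv.Perm (Fin N)) (v : M) :
    altOp k ρ (ρ σ v) = (((Equiv.Perm.sign σ : ℤ) : k)) • altOp k ρ v := by
  have key : ∑ π : Equiv.Perm (Fin N), (((sign π : ℤ) : k)) • ρ π (ρ σ v)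
      = (((sign σ : ℤ) : k)) • ∑ π : Equiv.Perm (Fin N), (((sign π : ℤ) : k)) • ρ π v := by
    rw [Finset.smul_sum]
    refine Fintype.sum_equiv (Equiv.mulRight σ) _ _ (fun π => ?_)
    simp only [Equiv.coe_mulRight, smul_smul]
    rw [map_mul ρ, Module.End.mul_apply]
    congr 1
    rcases Int.units_eq_one_or (sign σ) with h | h <;>
      rcases Int.units_eq_one_or (sign π) with h' | h' <;> simp [h, h']
  simp only [altOp_apply]
  rw [key, smul_comm]

lemma altOp_of_sign_action [CharZero k] (w : M)
    (h : ∀ σ : Equiv.Perm (Fin N), ρ σ w = (((Equiv.Perm.sign σ : ℤ) : k)) • w) :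
    altOp k ρ w = w := by
  rw [altOp_apply]
  have : ∀ σ : Equiv.Perm (Fin N), (((sign σ : ℤ) : k)) • ρ σ w = w := by
    intro σ
    rw [h σ, smul_smul, sign_cast_mul_self, one_smul]
  rw [Finset.sum_congr rfl fun σ _ => this σ, Finset.sum_const, Finset.card_univ,
    Fintype.card_perm, Fintype.card_fin, ← Nat.cast_smul_eq_nsmul k, smul_smul,
    inv_mul_cancel₀, one_smul]
  exact_mod_cast Nat.factorial_ne_zero N

/-- generation by adjacent transpositions -/
lemma sign_action_of_adjacent {n : ℕ} (ρ' : Equiv.Perm (Fin (n + 1)) →* Module.End k M) (w : M)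
    (h : ∀ i : Fin n, ρ' (Equiv.swap i.castSucc i.succ) w = -w) :
    ∀ σ : Equiv.Perm (Fin (n + 1)), ρ' σ w = (((Equiv.Perm.sign σ : ℤ) : k)) • w := by
  intro σ
  have hσ : σ ∈ Submonoid.closure (Set.range fun i : Fin n ↦ Equiv.swap i.castSucc i.succ) := by
    rw [Equiv.Perm.mclosure_swap_castSucc_succ]; trivial
  induction hσ using Submonoid.closure_induction with
  | mem x hx =>
    obtain ⟨i, rfl⟩ := hx
    rw [h i, Equiv.Perm.sign_swap (Fin.castSucc_lt_succ (i := i)).ne]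
    simp
  | one => simp
  | mul a b _ _ ha hb =>
    rw [map_mul, Module.End.mul_apply, hb, map_smul, ha, smul_smul, Equiv.Perm.sign_mul]
    congr 1
    push_cast
    ring

end Aux

/-- The differential `A* = Σ_{j} (−1)^j A_j : M^n → M^{n+1}` of a cosimplicial module. -/
noncomputable def AStar {k : Type*} [Field k] {M : ℕ → Type*}
    [∀ n, AddCommGroup (M n)] [∀ n, Module k (M n)]
    (A : ∀ n, ℕ → (M n →ₗ[k] M (n + 1))) (n : ℕ) : M n →ₗ[k] M (n + 1) :=
  ∑ j ∈ Finset.range (n + 2), ((-1 : k) ^ j) • A n j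

/-- For a cosimplicial `Σ_•`-module `M^•` over a field of characteristic zero, the
differential `A* = Σ (−1)^j A_j` preserves the sign decomposition
`M^n = sM^n ⊕ rM^n` (`sM^n` the fixed points of `Alt`, `rM^n = ker Alt`);
in particular `A*(sM^n)` lands in `sM^{n+1}`, which is a `Σ`-submodule on which `Alt` acts
as the identity. -/
theorem AStar_preserves_sign_decomposition
    (k : Type*) [Field k] [CharZero k]
    (M : ℕ → Type*) [∀ n, AddCommGroup (M n)] [∀ n, Module k (M n)]
    (ρ : ∀ n, Equiv.Perm (Fin (n + 1)) →* Module.End k (M n))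
    (A : ∀ n, ℕ → (M n →ₗ[k] M (n + 1)))
    -- the standard cosimplicial coface identities
    (hcoface : ∀ (n i j : ℕ), i < j → j ≤ n + 2 →
      (A (n + 1) j) ∘ₗ (A n i) = (A (n + 1) i) ∘ₗ (A n (j - 1)))
    -- compatibility with adjacent transpositions:  (i−1,i) ∘ A_j = A_j ∘ (i−2,i−1) for j < i−1
    (hswap_lt : ∀ (n i j : ℕ), ∀ _ : 1 ≤ i, ∀ hin : i ≤ n + 1, j + 1 < i →
      ((ρ (n + 1) (Equiv.swap (⟨i - 1, by omega⟩ : Fin (n + 2)) ⟨i, by omega⟩) :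
          M (n + 1) →ₗ[k] M (n + 1))) ∘ₗ A n j
        = A n j ∘ₗ ((ρ n (Equiv.swap (⟨i - 2, by omega⟩ : Fin (n + 1)) ⟨i - 1, by omega⟩) :
            M n →ₗ[k] M n)))
    -- (i−1,i) ∘ A_{i−1} = A_i
    (hswap_eq1 : ∀ (n i : ℕ), ∀ _ : 1 ≤ i, ∀ hin : i ≤ n + 1,
      ((ρ (n + 1) (Equiv.swap (⟨i - 1, by omega⟩ : Fin (n + 2)) ⟨i, by omega⟩) :
          M (n + 1) →ₗ[k] M (n + 1))) ∘ₗ A n (i - 1) = A n i)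
    -- (i−1,i) ∘ A_i = A_{i−1}
    (hswap_eq2 : ∀ (n i : ℕ), ∀ _ : 1 ≤ i, ∀ hin : i ≤ n + 1,
      ((ρ (n + 1) (Equiv.swap (⟨i - 1, by omega⟩ : Fin (n + 2)) ⟨i, by omega⟩) :
          M (n + 1) →ₗ[k] M (n + 1))) ∘ₗ A n i = A n (i - 1))
    -- (i−1,i) ∘ A_j = A_j ∘ (i−1,i) for j > i
    (hswap_gt : ∀ (n i j : ℕ), ∀ _ : 1 ≤ i, ∀ hij : i < j, ∀ hjn : j ≤ n + 1,
      ((ρ (n + 1) (Equiv.swap (⟨i - 1, by omega⟩ : Fin (n + 2)) ⟨i, by omega⟩) :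
          M (n + 1) →ₗ[k] M (n + 1))) ∘ₗ A n j
        = A n j ∘ₗ ((ρ n (Equiv.swap (⟨i - 1, by omega⟩ : Fin (n + 1)) ⟨i, by omega⟩) :
            M n →ₗ[k] M n))) :
    -- A* maps the alternating part into the alternating part
    (∀ (n : ℕ) (v : M n), altOp k (ρ n) v = v →
      altOp k (ρ (n + 1)) (AStar A n v) = AStar A n v) ∧
    -- A* maps the complementary part into the complementary part
    (∀ (n : ℕ) (v : M n), altOp k (ρ n) v = 0 →
      altOp k (ρ (n + 1)) (AStar A n v) = 0) ∧
    -- the alternating part is a Σ-submodule on which Alt acts as the identity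
    (∀ (n : ℕ) (σ : Equiv.Perm (Fin (n + 1))) (v : M n), altOp k (ρ n) v = v →
      altOp k (ρ n) ((ρ n σ) v) = (ρ n σ) v) := by
  have AStar_apply : ∀ (n : ℕ) (v : M n), AStar A n v
      = ∑ j ∈ Finset.range (n + 2), ((-1 : k) ^ j) • A n j v := by
    intro n v; simp [AStar]
  have hsign : ∀ (n : ℕ) (v : M n), altOp k (ρ n) v = v →
      ∀ σ : Equiv.Perm (Fin (n + 1)), ρ n σ v = (((Equiv.Perm.sign σ : ℤ) : k)) • v := by
    intro n v hv σ
    have h := ρ_altOp (ρ n) σ v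
    rw [hv] at h
    exact h
  refine ⟨?_, ?_, ?_⟩
  · -- A* preserves the alternating part
    intro n v hv
    have hv' := hsign n v hv
    have hgen : ∀ i : Fin (n + 1),
        ρ (n + 1) (Equiv.swap i.castSucc i.succ) (AStar A n v) = -(AStar A n v) := by
      intro i
      obtain ⟨m, hm⟩ := i
      have hsw : Equiv.swap (⟨m, hm⟩ : Fin (n + 1)).castSucc (⟨m, hm⟩ : Fin (n + 1)).succ
          = Equiv.swap (⟨m, by omega⟩ : Fin (n + 2)) ⟨m + 1, by omega⟩ := rfl
      rw [hsw, AStar_apply, map_sum, eq_neg_iff_add_eq_zero]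
      simp only [map_smul]
      rw [← Finset.sum_add_distrib]
      have hsub : ({m, m + 1} : Finset ℕ) ⊆ Finset.range (n + 2) := by
        intro x hx
        simp only [Finset.mem_insert, Finset.mem_singleton] at hx
        rcases hx with rfl | rfl <;> simp [Finset.mem_range] <;> omega
      rw [← Finset.sum_subset hsub ?_]
      · rw [Finset.sum_pair (by omega : m ≠ m + 1)]
        have E1 : m + 1 - 1 = m := by omega
        have h1 := hswap_eq1 n (m + 1) (by omega) (by omega)
        have h2 := hswap_eq2 n (m + 1) (by omega) (by omega)
        simp only [E1] at h1 h2
        have e1 := LinearMap.congr_fun h1 v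
        have e2 := LinearMap.congr_fun h2 v
        simp only [LinearMap.comp_apply] at e1 e2
        rw [e1, e2, pow_succ]
        module
      · intro j hj hjne
        simp only [Finset.mem_insert, Finset.mem_singleton] at hjne
        push_neg at hjne
        have hjr := Finset.mem_range.mp hj
        by_cases hlt : j < m
        · have E1 : m + 1 - 1 = m := by omega
          have h := hswap_lt n (m + 1) j (by omega) (by omega) (by omega)
          simp only [E1] at h
          have e := LinearMap.congr_fun h v
          simp only [LinearMap.comp_apply] at e
          rw [hv'] at e
          rw [Equiv.Perm.sign_swap (by simp only [ne_eq, Fin.mk.injEq]; omega)] at e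
          simp only [Units.val_neg, Units.val_one, Int.cast_neg, Int.cast_one,
            neg_one_smul, map_neg] at e
          rw [e]
          module
        · have E1 : m + 1 - 1 = m := by omega
          have h := hswap_gt n (m + 1) j (by omega) (by omega : m + 1 < j) (by omega)
          simp only [E1] at h
          have e := LinearMap.congr_fun h v
          simp only [LinearMap.comp_apply] at e
          rw [hv'] at e
          rw [Equiv.Perm.sign_swap (by simp only [ne_eq, Fin.mk.injEq]; omega)] at e
          simp only [Units.val_neg, Units.val_one, Int.cast_neg, Int.cast_one,
            neg_one_smul, map_neg] at e
          rw [e]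
          module
    have hall := sign_action_of_adjacent (ρ (n + 1)) (AStar A n v) hgen
    exact altOp_of_sign_action (ρ (n + 1)) (AStar A n v) hall
  · -- A* preserves the kernel of Alt
    intro n v hv
    have key : ∀ σ : Equiv.Perm (Fin (n + 1)), ∀ u : M n,
        altOp k (ρ (n + 1)) (A n 0 (ρ n σ u))
          = (((Equiv.Perm.sign σ : ℤ) : k)) • altOp k (ρ (n + 1)) (A n 0 u) := by
      intro σ
      have hσ : σ ∈ Submonoid.closure
          (Set.range fun i : Fin n ↦ Equiv.swap i.castSucc i.succ) := by
        rw [Equiv.Perm.mclosure_swap_castSucc_succ]; trivial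
      induction hσ using Submonoid.closure_induction with
      | mem x hx =>
        obtain ⟨i, rfl⟩ := hx
        intro u
        dsimp only
        obtain ⟨m, hm⟩ := i
        have hsw : Equiv.swap (⟨m, hm⟩ : Fin n).castSucc (⟨m, hm⟩ : Fin n).succ
            = Equiv.swap (⟨m, by omega⟩ : Fin (n + 1)) ⟨m + 1, by omega⟩ := rfl
        rw [hsw]
        have E1 : m + 2 - 1 = m + 1 := by omega
        have E2 : m + 2 - 2 = m := by omega
        have h := hswap_lt n (m + 2) 0 (by omega) (by omega) (by omega)
        simp only [E1, E2] at h
        have e := LinearMap.congr_fun h u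
        simp only [LinearMap.comp_apply] at e
        rw [← e, altOp_ρ,
          Equiv.Perm.sign_swap (by simp only [ne_eq, Fin.mk.injEq]; omega),
          Equiv.Perm.sign_swap (by simp only [ne_eq, Fin.mk.injEq]; omega)]
      | one => intro u; simp
      | mul a b _ _ ha hb =>
        intro u
        rw [map_mul, Module.End.mul_apply, ha (ρ n b u), hb u, smul_smul,
          Equiv.Perm.sign_mul]
        congr 1
        push_cast
        ring
    have step2 : altOp k (ρ (n + 1)) (A n 0 v) = 0 := by
      have hmain : altOp k (ρ (n + 1)) (A n 0 (altOp k (ρ n) v))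
          = altOp k (ρ (n + 1)) (A n 0 v) := by
        rw [altOp_apply (ρ n) v]
        simp only [map_smul, map_sum]
        have hterm : ∀ σ : Equiv.Perm (Fin (n + 1)),
            (((Equiv.Perm.sign σ : ℤ) : k)) • altOp k (ρ (n + 1)) (A n 0 (ρ n σ v))
              = altOp k (ρ (n + 1)) (A n 0 v) := by
          intro σ
          rw [key σ v, smul_smul, sign_cast_mul_self, one_smul]
        rw [Finset.sum_congr rfl fun σ _ => hterm σ, Finset.sum_const, Finset.card_univ,
          Fintype.card_perm, Fintype.card_fin, ← Nat.cast_smul_eq_nsmul k, smul_smul,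
          inv_mul_cancel₀, one_smul]
        exact_mod_cast Nat.factorial_ne_zero (n + 1)
      rw [← hmain, hv, map_zero, map_zero]
    have hAj : ∀ j, j ≤ n + 1 → altOp k (ρ (n + 1)) (A n j v) = 0 := by
      intro j
      induction j with
      | zero => intro _; exact step2
      | succ j ih =>
        intro hj
        have E1 : j + 1 - 1 = j := by omega
        have h := hswap_eq1 n (j + 1) (by omega) (by omega)
        simp only [E1] at h
        have e := LinearMap.congr_fun h v
        simp only [LinearMap.comp_apply] at e
        rw [← e, altOp_ρ, ih (by omega), smul_zero]
    rw [AStar_apply, map_sum]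
    refine Finset.sum_eq_zero fun j hj => ?_
    rw [map_smul, hAj j (Nat.lt_succ_iff.mp (Finset.mem_range.mp hj)), smul_zero]
  · -- the alternating part is stable under the Σ-action
    intro n σ v hv
    rw [altOp_ρ, hv, hsign n v hv σ]
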